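/- Let n ≥ 2, I = {0,1,…,n}, and let A be the affine Cartan matrix of type D_{n+1}^{(2)}: a_{ii} = 2, a_{01} = -2, a_{10} = -1, a_{i,i+1} = a_{i+1,i} = -1 for 1 ≤ i ≤ n−2, a_{n-1,n} = -1, a_{n,n-1} = -2, and all other entries 0; set q_0 = q_n = p and q_i = p^2 for 1 ≤ i ≤ n−1. Define z_1 = x_0^{-2} x_1, z_i = x_{i-1}^{-1} x_i for 2 ≤ i ≤ n−1, and z_n = x_{n-1}^{-1} x_n^2 (so that y_0 = z_1^{-1}, y_i = z_i z_{i+1}^{-1} for 1 ≤ i ≤ n−1, and y_n = z_n). Then the tuple φ_0 = (ı/(p − p^{-1}))·{ı·p^{-1}·z_1}_0, φ_i = {ı·p·z_i}_i·{ı·p^{-1}·z_{i+1}}_i for 1 ≤ i ≤ n−1, and φ_n = (ı/(p − p^{-1}))·{ı·p·z_n}_n satisfies the shiftability system for A. -/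

import Mathlib

noncomputable section

/-- The Laurent polynomial algebra `ℂ[x_i^{±1} : i ∈ ι]`, realized as the group algebra of the
free abelian group `ι → ℤ` over `ℂ` (for `ι` finite this is `ℤ^ι`). -/
abbrev LaurentAlg (ι : Type*) : Type _ := AddMonoidAlgebra ℂ (ι → ℤ)

/-- The monomial `∏_i x_i^{μ i}`. -/
def mono {ι : Type*} (μ : ι → ℤ) : LaurentAlg ι := AddMonoidAlgebra.single μ 1

lemma mono_zero {ι : Type*} : mono (0 : ι → ℤ) = 1 := rfl

lemma mono_add {ι : Type*} (μ ν : ι → ℤ) : mono (μ + ν) = mono μ * mono ν := by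
  simp [mono, AddMonoidAlgebra.single_mul_single]

/-- The auxiliary monoid homomorphism `μ ↦ c^{-μ i} · x^μ` underlying `ζ_i`. -/
def zetaHom {ι : Type*} (c : ℂˣ) (i : ι) : Multiplicative (ι → ℤ) →* LaurentAlg ι where
  toFun μ := ((c ^ (-(Multiplicative.toAdd μ i)) : ℂˣ) : ℂ) • mono (Multiplicative.toAdd μ)
  map_one' := by
    simp [mono_zero]
  map_mul' μ ν := by
    show ((c ^ (-(Multiplicative.toAdd (μ * ν) i)) : ℂˣ) : ℂ) • mono (Multiplicative.toAdd (μ * ν)) = _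
    have h : Multiplicative.toAdd (μ * ν) = Multiplicative.toAdd μ + Multiplicative.toAdd ν := rfl
    rw [h, mono_add, Pi.add_apply, neg_add, zpow_add, Units.val_mul, mul_smul,
      smul_mul_assoc, mul_smul_comm]

/-- The `ℂ`-algebra endomorphism `ζ_i` of the Laurent polynomial algebra determined by
`ζ_i(x_j) = c^{-δ_{ij}} x_j` (its inverse automorphism is `zeta c⁻¹ i`). -/
def zeta {ι : Type*} (c : ℂˣ) (i : ι) : LaurentAlg ι →ₐ[ℂ] LaurentAlg ι :=
  AddMonoidAlgebra.lift ℂ (LaurentAlg ι) (ι → ℤ) (zetaHom c i)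

/-- The element `{u}_s = (u - u⁻¹)/(s - s⁻¹)` for the unit `u = c · x^μ` of the Laurent
polynomial algebra (whose inverse is `c⁻¹ · x^{-μ}`). -/
def brk {ι : Type*} (s c : ℂ) (μ : ι → ℤ) : LaurentAlg ι :=
  ((s - s⁻¹)⁻¹ : ℂ) • (c • mono μ - c⁻¹ • mono (-μ))

/-- The shiftability system (4.1) for the integer matrix `a` with parameters `q i`:
`ζ_i(φ_i) − φ_i = {y_i}_i` for all `i`, and `φ_i φ_j = ζ_j^{-1}(φ_i)·ζ_i^{-1}(φ_j)` for `i ≠ j`,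
where `y_i = ∏_j x_j^{a j i}`. -/
def ShiftSystem {ι : Type*} (a : ι → ι → ℤ) (q : ι → ℂˣ) (φ : ι → LaurentAlg ι) : Prop :=
  (∀ i, zeta (q i) i (φ i) - φ i = brk ((q i : ℂ)) 1 (fun j => a j i)) ∧
  (∀ i j, i ≠ j → φ i * φ j = zeta (q j)⁻¹ j (φ i) * zeta (q i)⁻¹ i (φ j))

/-- The exponent vector of the single variable `x_k`. -/
def xvec {ι : Type*} [DecidableEq ι] (k : ι) : ι → ℤ := fun j => if j = k then 1 else 0

end

noncomputable section

open Complex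

/-- The vectors of exponents of `z_1 = x_0⁻²x_1`, `z_i = x_{i-1}⁻¹x_i` (`2 ≤ i ≤ n−1`),
`z_n = x_{n-1}⁻¹x_n²` for type `D_{n+1}^{(2)}`. -/
def zD (n : ℕ) (i : Fin (n + 1)) : Fin (n + 1) → ℤ :=
  if (i : ℕ) = 1 then xvec 1 - xvec 0 - xvec 0
  else if (i : ℕ) = n then xvec i + xvec i - xvec (i - 1)
  else xvec i - xvec (i - 1)

/-! ### Auxiliary machinery -/

/-- The two-term combination `a • x^μ + b • x^{-μ}`. -/
def TT {ι : Type*} (a b : ℂ) (μ : ι → ℤ) : LaurentAlg ι := a • mono μ + b • mono (-μ)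

section TTlemmas

variable {ι : Type*}

lemma TT_congr {a b a' b' : ℂ} (μ : ι → ℤ) (ha : a = a') (hb : b = b') :
    TT a b μ = TT a' b' μ := by rw [ha, hb]

lemma brk_eq_TT (s c : ℂ) (μ : ι → ℤ) :
    brk s c μ = TT ((s - s⁻¹)⁻¹ * c) (-((s - s⁻¹)⁻¹ * c⁻¹)) μ := by
  simp [brk, TT, smul_sub, mul_smul, sub_eq_add_neg]

lemma smul_TT (r a b : ℂ) (μ : ι → ℤ) : r • TT a b μ = TT (r * a) (r * b) μ := by
  simp [TT, smul_add, mul_smul]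

lemma neg_TT (a b : ℂ) (μ : ι → ℤ) : -TT a b μ = TT (-a) (-b) μ := by
  simp only [TT, neg_add, neg_smul]

lemma TT_add (a b c d : ℂ) (μ : ι → ℤ) : TT a b μ + TT c d μ = TT (a + c) (b + d) μ := by
  simp [TT, add_smul]; abel

lemma TT_neg (a b : ℂ) (μ : ι → ℤ) : TT a b (-μ) = TT b a μ := by
  simp [TT, neg_neg, add_comm]

lemma zeta_mono (c : ℂˣ) (i : ι) (μ : ι → ℤ) :
    zeta c i (mono μ) = ((c : ℂ) ^ (-(μ i))) • mono μ := by
  have : zeta c i (mono μ) = zetaHom c i (Multiplicative.ofAdd μ) := by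
    simp [zeta, mono, AddMonoidAlgebra.lift_single]
  rw [this]
  show ((c ^ (-(μ i)) : ℂˣ) : ℂ) • mono μ = _
  rw [Units.val_zpow_eq_zpow_val]

lemma zeta_TT (c : ℂˣ) (i : ι) (a b : ℂ) (μ : ι → ℤ) :
    zeta c i (TT a b μ) = TT ((c : ℂ) ^ (-(μ i)) * a) ((c : ℂ) ^ (μ i) * b) μ := by
  simp only [TT, map_add, map_smul, zeta_mono, Pi.neg_apply, neg_neg, smul_smul]
  rw [mul_comm a, mul_comm b]

lemma mono_mul (μ ν : ι → ℤ) : mono μ * mono ν = mono (μ + ν) := (mono_add μ ν).symm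

lemma TT_mul (a b c d : ℂ) (μ ν : ι → ℤ) :
    TT a b μ * TT c d ν =
      (a * c) • mono (μ + ν) + (b * d) • mono (-(μ + ν)) +
        ((a * d) • mono (μ - ν) + (b * c) • mono (-(μ - ν))) := by
  simp only [TT, add_mul, mul_add, smul_mul_smul_comm, mono_mul]
  have h1 : -μ + -ν = -(μ + ν) := by abel
  have h2 : μ + -ν = μ - ν := by abel
  have h3 : -μ + ν = -(μ - ν) := by abel
  rw [h1, h2, h3]
  abel

lemma TT_mul_same (a b c d : ℂ) (μ : ι → ℤ) :
    TT a b μ * TT c d μ =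
      (a * c) • mono (μ + μ) + (b * d) • mono (-(μ + μ)) +
        (a * d + b * c) • (1 : LaurentAlg ι) := by
  rw [TT_mul, sub_self, neg_zero, mono_zero, add_smul]

lemma TT_swap {a b c d : ℂ} (μ : ι → ℤ) (h : a * c = b * d) :
    TT a b μ * TT c d μ = TT b a μ * TT d c μ := by
  rw [TT_mul_same, TT_mul_same, h, add_comm (a * d) (b * c)]

lemma zeta_TT_triv (c : ℂˣ) (k : ι) (a b : ℂ) (μ : ι → ℤ) (h : μ k = 0) :
    zeta c k (TT a b μ) = TT a b μ := by
  rw [zeta_TT, h, neg_zero, zpow_zero, one_mul, one_mul]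

end TTlemmas

lemma zD_apply {n : ℕ} (hn : 2 ≤ n) (i : Fin (n + 1)) (h1 : 1 ≤ (i : ℕ)) (j : Fin (n + 1)) :
    zD n i j =
      (if (j : ℕ) = (i : ℕ) then (if (i : ℕ) = n then 2 else 1) else 0) -
        (if (j : ℕ) + 1 = (i : ℕ) then (if (i : ℕ) = 1 then 2 else 1) else 0) := by
  have hv1 : ((1 : Fin (n + 1)) : ℕ) = 1 := by
    rw [Fin.val_one', Nat.mod_eq_of_lt (by omega)]
  have hi0 : i ≠ 0 := by
    intro h; rw [h] at h1; simp at h1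
  have hsub : ((i - 1 : Fin (n + 1)) : ℕ) = (i : ℕ) - 1 := by
    rw [Fin.coe_sub_one, if_neg hi0]
  unfold zD xvec
  by_cases e1 : (i : ℕ) = 1
  · rw [if_pos e1]
    simp only [Pi.sub_apply, Fin.ext_iff, hv1, Fin.val_zero]
    split_ifs <;> omega
  · rw [if_neg e1]
    by_cases e2 : (i : ℕ) = n
    · rw [if_pos e2]
      simp only [Pi.sub_apply, Pi.add_apply, Fin.ext_iff, hsub]
      split_ifs <;> omega
    · rw [if_neg e2]
      simp only [Pi.sub_apply, Fin.ext_iff, hsub]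
      split_ifs <;> omega

/-! ### The data of the D_{n+1}^{(2)} system -/

def AmD (n : ℕ) : Fin (n + 1) → Fin (n + 1) → ℤ := fun i j : Fin (n + 1) =>
  if i = j then 2
  else if (i : ℕ) = 0 ∧ (j : ℕ) = 1 then -2
  else if (i : ℕ) = n ∧ (j : ℕ) = n - 1 then -2
  else if (j : ℕ) = (i : ℕ) + 1 ∨ (i : ℕ) = (j : ℕ) + 1 then -1
  else 0

def QD (n : ℕ) (p : ℂˣ) : Fin (n + 1) → ℂˣ :=
  fun i : Fin (n + 1) => if (i : ℕ) = 0 ∨ (i : ℕ) = n then p else p ^ 2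

def PhiD (n : ℕ) (p : ℂˣ) : Fin (n + 1) → LaurentAlg (Fin (n + 1)) :=
  fun i : Fin (n + 1) =>
    if (i : ℕ) = 0 then
      (Complex.I * ((p : ℂ) - (p : ℂ)⁻¹)⁻¹) •
        brk (p : ℂ) (Complex.I * (p : ℂ)⁻¹) (zD n 1)
    else if (i : ℕ) = n then
      (Complex.I * ((p : ℂ) - (p : ℂ)⁻¹)⁻¹) •
        brk (p : ℂ) (Complex.I * (p : ℂ)) (zD n i)
    else
      brk ((p : ℂ) ^ 2) (Complex.I * (p : ℂ)) (zD n i) *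
        brk ((p : ℂ) ^ 2) (Complex.I * (p : ℂ)⁻¹) (zD n (i + 1))

/-! ### Fin plumbing -/

lemma fv1 {n : ℕ} (hn : 2 ≤ n) : ((1 : Fin (n + 1)) : ℕ) = 1 := by
  rw [Fin.val_one', Nat.mod_eq_of_lt (by omega)]

lemma fvadd {n : ℕ} (i : Fin (n + 1)) (h : (i : ℕ) < n) :
    ((i + 1 : Fin (n + 1)) : ℕ) = (i : ℕ) + 1 :=
  Fin.val_add_one_of_lt (by rw [Fin.lt_def, Fin.val_last]; exact h)

/-! ### clean TT forms of the phi's -/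

section CleanForms

variable {n : ℕ} (hn : 2 ≤ n) (p : ℂˣ)

lemma brk_I_eq (v c : ℂ) (μ : Fin (n + 1) → ℤ) :
    brk v (Complex.I * c) μ = Complex.I • TT ((v - v⁻¹)⁻¹ * c) ((v - v⁻¹)⁻¹ * c⁻¹) μ := by
  rw [brk_eq_TT, smul_TT]
  exact TT_congr μ (by ring) (by rw [mul_inv, Complex.inv_I]; ring)

lemma I_smul_I_smul (r : ℂ) (x : LaurentAlg (Fin (n + 1))) :
    (Complex.I * r) • (Complex.I • x) = -(r • x) := by
  rw [smul_smul, show Complex.I * r * Complex.I = -r from by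
    linear_combination r * Complex.I_mul_I, neg_smul]

lemma phi0_clean (μ : Fin (n + 1) → ℤ) :
    (Complex.I * ((p : ℂ) - (p : ℂ)⁻¹)⁻¹) • brk (p : ℂ) (Complex.I * (p : ℂ)⁻¹) μ =
      -TT (((p : ℂ) - (p : ℂ)⁻¹)⁻¹ * (((p : ℂ) - (p : ℂ)⁻¹)⁻¹ * (p : ℂ)⁻¹))
        (((p : ℂ) - (p : ℂ)⁻¹)⁻¹ * (((p : ℂ) - (p : ℂ)⁻¹)⁻¹ * (p : ℂ))) μ := by
  rw [brk_I_eq, inv_inv, I_smul_I_smul, smul_TT]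

lemma phin_clean (μ : Fin (n + 1) → ℤ) :
    (Complex.I * ((p : ℂ) - (p : ℂ)⁻¹)⁻¹) • brk (p : ℂ) (Complex.I * (p : ℂ)) μ =
      -TT (((p : ℂ) - (p : ℂ)⁻¹)⁻¹ * (((p : ℂ) - (p : ℂ)⁻¹)⁻¹ * (p : ℂ)))
        (((p : ℂ) - (p : ℂ)⁻¹)⁻¹ * (((p : ℂ) - (p : ℂ)⁻¹)⁻¹ * (p : ℂ)⁻¹)) μ := by
  rw [brk_I_eq, I_smul_I_smul, smul_TT]

lemma phim_clean (μ ν : Fin (n + 1) → ℤ) :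
    brk ((p : ℂ) ^ 2) (Complex.I * (p : ℂ)) μ * brk ((p : ℂ) ^ 2) (Complex.I * (p : ℂ)⁻¹) ν =
      -(TT (((p : ℂ) ^ 2 - ((p : ℂ) ^ 2)⁻¹)⁻¹ * (p : ℂ))
            (((p : ℂ) ^ 2 - ((p : ℂ) ^ 2)⁻¹)⁻¹ * (p : ℂ)⁻¹) μ *
        TT (((p : ℂ) ^ 2 - ((p : ℂ) ^ 2)⁻¹)⁻¹ * (p : ℂ)⁻¹)
            (((p : ℂ) ^ 2 - ((p : ℂ) ^ 2)⁻¹)⁻¹ * (p : ℂ)) ν) := by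
  rw [brk_I_eq, brk_I_eq, inv_inv, smul_mul_smul_comm, Complex.I_mul_I, neg_one_smul]

lemma PhiD_zero (i : Fin (n + 1)) (h : (i : ℕ) = 0) :
    PhiD n p i = -TT (((p : ℂ) - (p : ℂ)⁻¹)⁻¹ * (((p : ℂ) - (p : ℂ)⁻¹)⁻¹ * (p : ℂ)⁻¹))
      (((p : ℂ) - (p : ℂ)⁻¹)⁻¹ * (((p : ℂ) - (p : ℂ)⁻¹)⁻¹ * (p : ℂ))) (zD n 1) := by
  rw [PhiD, if_pos h, phi0_clean]

lemma PhiD_n (i : Fin (n + 1)) (hn : 2 ≤ n) (h : (i : ℕ) = n) :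
    PhiD n p i = -TT (((p : ℂ) - (p : ℂ)⁻¹)⁻¹ * (((p : ℂ) - (p : ℂ)⁻¹)⁻¹ * (p : ℂ)))
      (((p : ℂ) - (p : ℂ)⁻¹)⁻¹ * (((p : ℂ) - (p : ℂ)⁻¹)⁻¹ * (p : ℂ)⁻¹)) (zD n i) := by
  rw [PhiD, if_neg (by omega), if_pos h, phin_clean]

lemma PhiD_mid (i : Fin (n + 1)) (h1 : (i : ℕ) ≠ 0) (h2 : (i : ℕ) ≠ n) :
    PhiD n p i =
      -(TT (((p : ℂ) ^ 2 - ((p : ℂ) ^ 2)⁻¹)⁻¹ * (p : ℂ))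
            (((p : ℂ) ^ 2 - ((p : ℂ) ^ 2)⁻¹)⁻¹ * (p : ℂ)⁻¹) (zD n i) *
        TT (((p : ℂ) ^ 2 - ((p : ℂ) ^ 2)⁻¹)⁻¹ * (p : ℂ)⁻¹)
            (((p : ℂ) ^ 2 - ((p : ℂ) ^ 2)⁻¹)⁻¹ * (p : ℂ)) (zD n (i + 1))) := by
  rw [PhiD, if_neg h1, if_neg h2, phim_clean]

lemma QD_p (i : Fin (n + 1)) (h : (i : ℕ) = 0 ∨ (i : ℕ) = n) : QD n p i = p := by
  rw [QD, if_pos h]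

lemma QD_p2 (i : Fin (n + 1)) (h1 : (i : ℕ) ≠ 0) (h2 : (i : ℕ) ≠ n) : QD n p i = p ^ 2 := by
  rw [QD, if_neg (not_or.mpr ⟨h1, h2⟩)]

end CleanForms

/-! ### column lemmas -/

lemma colA {n : ℕ} (hn : 2 ≤ n) (i : Fin (n + 1)) (hi : (i : ℕ) = 0) :
    (fun j => AmD n j i) = -zD n 1 := by
  funext j
  have hj := j.isLt
  simp only [AmD, Pi.neg_apply, Fin.ext_iff]
  rw [zD_apply hn 1 (fv1 hn).ge j]
  simp only [fv1 hn]
  split_ifs <;> omega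

lemma colB {n : ℕ} (hn : 2 ≤ n) (i : Fin (n + 1)) (hi : (i : ℕ) = n) :
    (fun j => AmD n j i) = zD n i := by
  funext j
  have hj := j.isLt
  simp only [AmD, Fin.ext_iff]
  rw [zD_apply hn i (by omega) j]
  split_ifs <;> omega

lemma colC {n : ℕ} (hn : 2 ≤ n) (i : Fin (n + 1)) (h1 : (i : ℕ) ≠ 0) (h2 : (i : ℕ) ≠ n) :
    (fun j => AmD n j i) = zD n i - zD n (i + 1) := by
  have hii := i.isLt
  have hadd := fvadd i (by omega)
  funext j
  have hj := j.isLt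
  simp only [AmD, Pi.sub_apply, Fin.ext_iff]
  rw [zD_apply hn i (by omega) j, zD_apply hn (i + 1) (by rw [hadd]; omega) j]
  simp only [hadd]
  split_ifs <;> omega

/-! ### triviality of zeta away from the support -/

lemma zeta_PhiD_triv {n : ℕ} (hn : 2 ≤ n) (p : ℂˣ) (k i : Fin (n + 1)) (c : ℂˣ)
    (hk : (i : ℕ) + 1 < (k : ℕ) ∨ (k : ℕ) + 1 < (i : ℕ)) :
    zeta c k (PhiD n p i) = PhiD n p i := by
  have hik := i.isLt
  have hkk := k.isLt
  by_cases h0 : (i : ℕ) = 0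
  · rw [PhiD_zero p i h0, map_neg, zeta_TT_triv]
    rw [zD_apply hn 1 (fv1 hn).ge k]
    simp only [fv1 hn]
    split_ifs <;> omega
  · by_cases h2 : (i : ℕ) = n
    · rw [PhiD_n p i hn h2, map_neg, zeta_TT_triv]
      rw [zD_apply hn i (by omega) k]
      split_ifs <;> omega
    · have hadd := fvadd i (by omega)
      rw [PhiD_mid p i h0 h2, map_neg, map_mul, zeta_TT_triv, zeta_TT_triv]
      · rw [zD_apply hn (i + 1) (by rw [hadd]; omega) k]
        simp only [hadd]
        split_ifs <;> omega
      · rw [zD_apply hn i (by omega) k]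
        split_ifs <;> omega

/-! ### scalar helpers -/

lemma pTeq (p : ℂˣ) (h21 : (p : ℂ) ^ 2 - 1 ≠ 0) :
    ((p : ℂ) - (p : ℂ)⁻¹)⁻¹ = (p : ℂ) / ((p : ℂ) ^ 2 - 1) := by
  have hu : (p : ℂ) ≠ 0 := Units.ne_zero p
  rw [show (p : ℂ) - (p : ℂ)⁻¹ = ((p : ℂ) ^ 2 - 1) / (p : ℂ) from by field_simp, inv_div]

lemma pSeq (p : ℂˣ) (h41 : (p : ℂ) ^ 4 - 1 ≠ 0) :
    ((p : ℂ) ^ 2 - ((p : ℂ) ^ 2)⁻¹)⁻¹ = (p : ℂ) ^ 2 / ((p : ℂ) ^ 4 - 1) := by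
  have hu : (p : ℂ) ≠ 0 := Units.ne_zero p
  rw [show (p : ℂ) ^ 2 - ((p : ℂ) ^ 2)⁻¹ = ((p : ℂ) ^ 4 - 1) / (p : ℂ) ^ 2 from by
    field_simp, inv_div]

/-! ### equation (1) -/

set_option maxHeartbeats 1600000 in
lemma diagD {n : ℕ} (hn : 2 ≤ n) (p : ℂˣ) (h21 : (p : ℂ) ^ 2 - 1 ≠ 0)
    (h41 : (p : ℂ) ^ 4 - 1 ≠ 0) (i : Fin (n + 1)) :
    zeta (QD n p i) i (PhiD n p i) - PhiD n p i =
      brk ((QD n p i : ℂ)) 1 (fun j => AmD n j i) := by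
  have hu : (p : ℂ) ≠ 0 := Units.ne_zero p
  have hTeq := pTeq p h21
  have hSeq := pSeq p h41
  by_cases hi0 : (i : ℕ) = 0
  · rw [PhiD_zero p i hi0, QD_p p i (Or.inl hi0), colA hn i hi0]
    have e : zD n 1 i = -2 := by
      rw [zD_apply hn 1 (fv1 hn).ge i]; simp only [fv1 hn]; split_ifs <;> omega
    rw [map_neg, zeta_TT, e]
    simp only [neg_neg, zpow_neg, zpow_ofNat]
    rw [sub_neg_eq_add, neg_TT, TT_add, brk_eq_TT, TT_neg]
    exact TT_congr _ (by simp only [hTeq]; field_simp; ring)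
      (by simp only [hTeq]; field_simp; ring)
  · by_cases hin : (i : ℕ) = n
    · rw [PhiD_n p i hn hin, QD_p p i (Or.inr hin), colB hn i hin]
      have e : zD n i i = 2 := by
        rw [zD_apply hn i (by omega) i]; split_ifs <;> omega
      rw [map_neg, zeta_TT, e]
      simp only [neg_neg, zpow_neg, zpow_ofNat]
      rw [sub_neg_eq_add, neg_TT, TT_add, brk_eq_TT]
      exact TT_congr _ (by simp only [hTeq]; field_simp; ring)
        (by simp only [hTeq]; field_simp; ring)
    · have hii := i.isLt
      have hadd := fvadd i (by omega)
      rw [PhiD_mid p i hi0 hin, QD_p2 p i hi0 hin, colC hn i hi0 hin]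
      have e1 : zD n i i = 1 := by
        rw [zD_apply hn i (by omega) i]; split_ifs <;> omega
      have e2 : zD n (i + 1) i = -1 := by
        rw [zD_apply hn (i + 1) (by rw [hadd]; omega) i]
        simp only [hadd]
        split_ifs <;> omega
      rw [map_neg, map_mul, zeta_TT, zeta_TT, e1, e2]
      simp only [Units.val_pow_eq_pow_val, neg_neg, zpow_neg, zpow_one, inv_inv]
      rw [sub_neg_eq_add, brk_eq_TT, TT_mul, TT_mul]
      simp only [TT]
      match_scalars <;> (simp only [hTeq, hSeq]; field_simp; ring)

set_option maxHeartbeats 2000000 in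
lemma adjD {n : ℕ} (hn : 2 ≤ n) (p : ℂˣ) (h21 : (p : ℂ) ^ 2 - 1 ≠ 0)
    (h41 : (p : ℂ) ^ 4 - 1 ≠ 0) (a b : Fin (n + 1)) (hab : (b : ℕ) = (a : ℕ) + 1) :
    PhiD n p a * PhiD n p b =
      zeta (QD n p b)⁻¹ b (PhiD n p a) * zeta (QD n p a)⁻¹ a (PhiD n p b) := by
  have hu : (p : ℂ) ≠ 0 := Units.ne_zero p
  have hTeq := pTeq p h21
  have hSeq := pSeq p h41
  have haa := a.isLt
  have hbb := b.isLt
  by_cases h0 : (a : ℕ) = 0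
  · -- case (0,1)
    have hbn : (b : ℕ) ≠ n := by omega
    have hbF : b = (1 : Fin (n + 1)) := Fin.ext (by rw [fv1 hn]; omega)
    rw [PhiD_zero p a h0, PhiD_mid p b (by omega) hbn, QD_p p a (Or.inl h0),
      QD_p2 p b (by omega) hbn, hbF]
    have hadd1 : ((1 + 1 : Fin (n + 1)) : ℕ) = 2 := by
      rw [fvadd 1 (by rw [fv1 hn]; omega), fv1 hn]
    have e1 : zD n 1 1 = 1 := by
      rw [zD_apply hn 1 (fv1 hn).ge 1]; simp only [fv1 hn]; split_ifs <;> omega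
    have e2 : zD n 1 a = -2 := by
      rw [zD_apply hn 1 (fv1 hn).ge a]; simp only [fv1 hn]; split_ifs <;> omega
    have e3 : zD n (1 + 1) a = 0 := by
      rw [zD_apply hn (1 + 1) (by rw [hadd1]; omega) a]
      simp only [hadd1]
      split_ifs <;> omega
    rw [map_neg, map_neg, map_mul, zeta_TT, zeta_TT, zeta_TT, e1, e2, e3]
    simp only [Units.val_inv_eq_inv_val, Units.val_pow_eq_pow_val, neg_neg, neg_zero,
      zpow_zero, one_mul, zpow_neg, zpow_one, zpow_ofNat, pow_zero, pow_one, inv_inv]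
    rw [show (p : ℂ) ^ 2 * (((p : ℂ) - (p : ℂ)⁻¹)⁻¹ * (((p : ℂ) - (p : ℂ)⁻¹)⁻¹ * (p : ℂ)⁻¹)) =
          ((p : ℂ) - (p : ℂ)⁻¹)⁻¹ * (((p : ℂ) - (p : ℂ)⁻¹)⁻¹ * (p : ℂ)) from by
        simp only [hTeq]; field_simp,
      show ((p : ℂ) ^ 2)⁻¹ * (((p : ℂ) - (p : ℂ)⁻¹)⁻¹ * (((p : ℂ) - (p : ℂ)⁻¹)⁻¹ * (p : ℂ))) =
          ((p : ℂ) - (p : ℂ)⁻¹)⁻¹ * (((p : ℂ) - (p : ℂ)⁻¹)⁻¹ * (p : ℂ)⁻¹) from by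
        simp only [hTeq]; field_simp,
      show (p : ℂ)⁻¹ ^ 2 * (((p : ℂ) ^ 2 - ((p : ℂ) ^ 2)⁻¹)⁻¹ * (p : ℂ)) =
          ((p : ℂ) ^ 2 - ((p : ℂ) ^ 2)⁻¹)⁻¹ * (p : ℂ)⁻¹ from by
        simp only [hSeq]; field_simp,
      show ((p : ℂ)⁻¹ ^ 2)⁻¹ * (((p : ℂ) ^ 2 - ((p : ℂ) ^ 2)⁻¹)⁻¹ * (p : ℂ)⁻¹) =
          ((p : ℂ) ^ 2 - ((p : ℂ) ^ 2)⁻¹)⁻¹ * (p : ℂ) from by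
        simp only [hSeq]; field_simp]
    have hsw := TT_swap (zD n 1)
      (show (((p : ℂ) - (p : ℂ)⁻¹)⁻¹ * (((p : ℂ) - (p : ℂ)⁻¹)⁻¹ * (p : ℂ)⁻¹)) *
          (((p : ℂ) ^ 2 - ((p : ℂ) ^ 2)⁻¹)⁻¹ * (p : ℂ)) =
        (((p : ℂ) - (p : ℂ)⁻¹)⁻¹ * (((p : ℂ) - (p : ℂ)⁻¹)⁻¹ * (p : ℂ))) *
          (((p : ℂ) ^ 2 - ((p : ℂ) ^ 2)⁻¹)⁻¹ * (p : ℂ)⁻¹) from by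
        field_simp)
    linear_combination hsw * TT (((p : ℂ) ^ 2 - ((p : ℂ) ^ 2)⁻¹)⁻¹ * (p : ℂ)⁻¹)
      (((p : ℂ) ^ 2 - ((p : ℂ) ^ 2)⁻¹)⁻¹ * (p : ℂ)) (zD n (1 + 1))
  · by_cases h2 : (b : ℕ) = n
    · -- case (n-1, n)
      have han : (a : ℕ) ≠ n := by omega
      have hadd := fvadd a (by omega)
      have hbF : b = a + 1 := Fin.ext (by rw [hadd]; omega)
      rw [PhiD_mid p a h0 han, PhiD_n p b hn h2, QD_p2 p a h0 han,
        QD_p p b (Or.inr h2), hbF]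
      have e1 : zD n a (a + 1) = 0 := by
        rw [zD_apply hn a (by omega) (a + 1)]
        simp only [hadd]
        split_ifs <;> omega
      have e2 : zD n (a + 1) (a + 1) = 2 := by
        rw [zD_apply hn (a + 1) (by rw [hadd]; omega) (a + 1)]
        simp only [hadd]
        split_ifs <;> omega
      have e3 : zD n (a + 1) a = -1 := by
        rw [zD_apply hn (a + 1) (by rw [hadd]; omega) a]
        simp only [hadd]
        split_ifs <;> omega
      rw [map_neg, map_neg, map_mul, zeta_TT, zeta_TT, zeta_TT, e1, e2, e3]
      simp only [Units.val_inv_eq_inv_val, Units.val_pow_eq_pow_val, neg_neg, neg_zero,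
        zpow_zero, one_mul, zpow_neg, zpow_one, zpow_ofNat, pow_zero, pow_one, inv_inv]
      rw [show ((p : ℂ)⁻¹ ^ 2)⁻¹ * (((p : ℂ) ^ 2 - ((p : ℂ) ^ 2)⁻¹)⁻¹ * (p : ℂ)⁻¹) =
            ((p : ℂ) ^ 2 - ((p : ℂ) ^ 2)⁻¹)⁻¹ * (p : ℂ) from by
          simp only [hSeq]; field_simp,
        show (p : ℂ)⁻¹ ^ 2 * (((p : ℂ) ^ 2 - ((p : ℂ) ^ 2)⁻¹)⁻¹ * (p : ℂ)) =
            ((p : ℂ) ^ 2 - ((p : ℂ) ^ 2)⁻¹)⁻¹ * (p : ℂ)⁻¹ from by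
          simp only [hSeq]; field_simp,
        show ((p : ℂ) ^ 2)⁻¹ * (((p : ℂ) - (p : ℂ)⁻¹)⁻¹ * (((p : ℂ) - (p : ℂ)⁻¹)⁻¹ * (p : ℂ))) =
            ((p : ℂ) - (p : ℂ)⁻¹)⁻¹ * (((p : ℂ) - (p : ℂ)⁻¹)⁻¹ * (p : ℂ)⁻¹) from by
          simp only [hTeq]; field_simp,
        show (p : ℂ) ^ 2 * (((p : ℂ) - (p : ℂ)⁻¹)⁻¹ * (((p : ℂ) - (p : ℂ)⁻¹)⁻¹ * (p : ℂ)⁻¹)) =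
            ((p : ℂ) - (p : ℂ)⁻¹)⁻¹ * (((p : ℂ) - (p : ℂ)⁻¹)⁻¹ * (p : ℂ)) from by
          simp only [hTeq]; field_simp]
      have hsw := TT_swap (zD n (a + 1))
        (show (((p : ℂ) ^ 2 - ((p : ℂ) ^ 2)⁻¹)⁻¹ * (p : ℂ)⁻¹) *
            (((p : ℂ) - (p : ℂ)⁻¹)⁻¹ * (((p : ℂ) - (p : ℂ)⁻¹)⁻¹ * (p : ℂ))) =
          (((p : ℂ) ^ 2 - ((p : ℂ) ^ 2)⁻¹)⁻¹ * (p : ℂ)) *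
            (((p : ℂ) - (p : ℂ)⁻¹)⁻¹ * (((p : ℂ) - (p : ℂ)⁻¹)⁻¹ * (p : ℂ)⁻¹)) from by
          field_simp)
      linear_combination hsw * TT (((p : ℂ) ^ 2 - ((p : ℂ) ^ 2)⁻¹)⁻¹ * (p : ℂ))
        (((p : ℂ) ^ 2 - ((p : ℂ) ^ 2)⁻¹)⁻¹ * (p : ℂ)⁻¹) (zD n a)
    · -- case mid-mid
      have han : (a : ℕ) ≠ n := by omega
      have hb0 : (b : ℕ) ≠ 0 := by omega
      have hadd := fvadd a (by omega)
      have hbF : b = a + 1 := Fin.ext (by rw [hadd]; omega)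
      have hadd2 : ((a + 1 + 1 : Fin (n + 1)) : ℕ) = (a : ℕ) + 2 := by
        rw [fvadd (a + 1) (by rw [hadd]; omega), hadd]
      rw [PhiD_mid p a h0 han, PhiD_mid p b hb0 h2, QD_p2 p a h0 han,
        QD_p2 p b hb0 h2, hbF]
      have e1 : zD n a (a + 1) = 0 := by
        rw [zD_apply hn a (by omega) (a + 1)]
        simp only [hadd]
        split_ifs <;> omega
      have e2 : zD n (a + 1) (a + 1) = 1 := by
        rw [zD_apply hn (a + 1) (by rw [hadd]; omega) (a + 1)]
        simp only [hadd]
        split_ifs <;> omega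
      have e3 : zD n (a + 1) a = -1 := by
        rw [zD_apply hn (a + 1) (by rw [hadd]; omega) a]
        simp only [hadd]
        split_ifs <;> omega
      have e4 : zD n (a + 1 + 1) a = 0 := by
        rw [zD_apply hn (a + 1 + 1) (by rw [hadd2]; omega) a]
        simp only [hadd2]
        split_ifs <;> omega
      rw [map_neg, map_neg, map_mul, map_mul, zeta_TT, zeta_TT, zeta_TT, zeta_TT,
        e1, e2, e3, e4]
      simp only [Units.val_inv_eq_inv_val, Units.val_pow_eq_pow_val, neg_neg, neg_zero,
        zpow_zero, one_mul, zpow_neg, zpow_one, zpow_ofNat, pow_zero, pow_one, inv_inv]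
      rw [show (p : ℂ) ^ 2 * (((p : ℂ) ^ 2 - ((p : ℂ) ^ 2)⁻¹)⁻¹ * (p : ℂ)⁻¹) =
            ((p : ℂ) ^ 2 - ((p : ℂ) ^ 2)⁻¹)⁻¹ * (p : ℂ) from by
          simp only [hSeq]; field_simp,
        show ((p : ℂ) ^ 2)⁻¹ * (((p : ℂ) ^ 2 - ((p : ℂ) ^ 2)⁻¹)⁻¹ * (p : ℂ)) =
            ((p : ℂ) ^ 2 - ((p : ℂ) ^ 2)⁻¹)⁻¹ * (p : ℂ)⁻¹ from by
          simp only [hSeq]; field_simp]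
      ring

lemma offD {n : ℕ} (hn : 2 ≤ n) (p : ℂˣ) (h21 : (p : ℂ) ^ 2 - 1 ≠ 0)
    (h41 : (p : ℂ) ^ 4 - 1 ≠ 0) (i j : Fin (n + 1)) (hij : i ≠ j) :
    PhiD n p i * PhiD n p j =
      zeta (QD n p j)⁻¹ j (PhiD n p i) * zeta (QD n p i)⁻¹ i (PhiD n p j) := by
  rcases Nat.lt_or_ge ((i : ℕ) + 1) ((j : ℕ)) with h | h
  · rw [zeta_PhiD_triv hn p j i _ (Or.inl h), zeta_PhiD_triv hn p i j _ (Or.inr h)]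
  · rcases Nat.lt_or_ge ((j : ℕ) + 1) ((i : ℕ)) with h' | h'
    · rw [zeta_PhiD_triv hn p j i _ (Or.inr h'), zeta_PhiD_triv hn p i j _ (Or.inl h')]
    · have hij' : (i : ℕ) ≠ (j : ℕ) := fun hh => hij (Fin.ext hh)
      have : (j : ℕ) = (i : ℕ) + 1 ∨ (i : ℕ) = (j : ℕ) + 1 := by omega
      rcases this with hadj | hadj
      · exact adjD hn p h21 h41 i j hadj
      · rw [mul_comm (PhiD n p i) (PhiD n p j), adjD hn p h21 h41 j i hadj]
        exact mul_comm _ _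

/-- For the affine Cartan matrix of type `D_{n+1}^{(2)}`, `n ≥ 2`
(`q_0 = q_n = p`, `q_i = p²` otherwise), the tuple `φ_0 = (ı/(p−p⁻¹))·{ı p⁻¹ z_1}_0`,
`φ_i = {ı p z_i}_i·{ı p⁻¹ z_{i+1}}_i` (`1 ≤ i ≤ n−1`), `φ_n = (ı/(p−p⁻¹))·{ı p z_n}_n`
solves the shiftability system. -/
theorem shiftability_Dn12_aff (n : ℕ) (hn : 2 ≤ n)
    (p : ℂˣ) (hp : ∀ m : ℕ, 0 < m → p ^ m ≠ 1) :
    ShiftSystem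
      (fun i j : Fin (n + 1) =>
        if i = j then 2
        else if (i : ℕ) = 0 ∧ (j : ℕ) = 1 then -2
        else if (i : ℕ) = n ∧ (j : ℕ) = n - 1 then -2
        else if (j : ℕ) = (i : ℕ) + 1 ∨ (i : ℕ) = (j : ℕ) + 1 then -1
        else 0)
      (fun i : Fin (n + 1) => if (i : ℕ) = 0 ∨ (i : ℕ) = n then p else p ^ 2)
      (fun i : Fin (n + 1) =>
        if (i : ℕ) = 0 then
          (Complex.I * ((p : ℂ) - (p : ℂ)⁻¹)⁻¹) •
            brk (p : ℂ) (Complex.I * (p : ℂ)⁻¹) (zD n 1)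
        else if (i : ℕ) = n then
          (Complex.I * ((p : ℂ) - (p : ℂ)⁻¹)⁻¹) •
            brk (p : ℂ) (Complex.I * (p : ℂ)) (zD n i)
        else
          brk ((p : ℂ) ^ 2) (Complex.I * (p : ℂ)) (zD n i) *
            brk ((p : ℂ) ^ 2) (Complex.I * (p : ℂ)⁻¹) (zD n (i + 1))) := by
  have h21 : (p : ℂ) ^ 2 - 1 ≠ 0 := sub_ne_zero.mpr (fun h => hp 2 (by norm_num)
    (Units.ext (by rw [Units.val_pow_eq_pow_val, Units.val_one]; exact h)))
  have h41 : (p : ℂ) ^ 4 - 1 ≠ 0 := sub_ne_zero.mpr (fun h => hp 4 (by norm_num)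
    (Units.ext (by rw [Units.val_pow_eq_pow_val, Units.val_one]; exact h)))
  exact ⟨fun i => diagD hn p h21 h41 i, fun i j hij => offD hn p h21 h41 i j hij⟩

end
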